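/- arXiv:2301.08238 — 2 statements merged into one kernel-verified Lean document; each statement's English description precedes it below -/
import Mathlib

section
/- For every q > 1 there exists a constant C > 0 such that for every r > 0 and every c ∈ ℝ³, the integral of x ↦ |x − c|^{−2q} over the set {x ∈ ℝ³ : |x| = r and |x − c| ≥ 2}, with respect to the 2-dimensional Hausdorff measure, is at most C. -/
open MeasureTheory

section SIBhelpers

open Metric Set RealInnerProductSpace Module
open scoped NNReal ENNReal

set_option maxHeartbeats 1000000

noncomputable section
local notation "E3" => EuclideanSpace ℝ (Fin 3)

variable {E : Type*} [NormedAddCommGroup E] [InnerProductSpace ℝ E]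

lemma SIB_radial_lipschitzOn (r : ℝ) (hr : 0 < r) :
    LipschitzOnWith 2 (fun x : E => (r / ‖x‖) • x) {x | r ≤ ‖x‖} := by
  rw [lipschitzOnWith_iff_dist_le_mul]
  intro x hx y hy
  simp only [mem_setOf_eq] at hx hy
  have hxn : 0 < ‖x‖ := lt_of_lt_of_le hr hx
  have hyn : 0 < ‖y‖ := lt_of_lt_of_le hr hy
  have key : (r / ‖x‖) • x - (r / ‖y‖) • y
      = (r / ‖x‖) • (x - y) + ((r / ‖x‖) - (r / ‖y‖)) • y := by
    rw [smul_sub, sub_smul]; abel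
  rw [dist_eq_norm, key, dist_eq_norm]
  have h1 : ‖(r / ‖x‖) • (x - y)‖ ≤ ‖x - y‖ := by
    rw [norm_smul]
    have : ‖r / ‖x‖‖ ≤ 1 := by
      rw [Real.norm_eq_abs, abs_of_nonneg (by positivity)]
      rw [div_le_one hxn]; exact hx
    calc ‖r / ‖x‖‖ * ‖x - y‖ ≤ 1 * ‖x - y‖ := by
          exact mul_le_mul_of_nonneg_right this (norm_nonneg _)
      _ = ‖x - y‖ := one_mul _
  have h2 : ‖((r / ‖x‖) - (r / ‖y‖)) • y‖ ≤ ‖x - y‖ := by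
    rw [norm_smul, Real.norm_eq_abs]
    have : (r / ‖x‖) - (r / ‖y‖) = r * (‖y‖ - ‖x‖) / (‖x‖ * ‖y‖) := by
      field_simp
    rw [this, abs_div, abs_mul, abs_of_nonneg hr.le, abs_mul]
    rw [abs_of_nonneg hxn.le, abs_of_nonneg hyn.le]
    rw [div_mul_eq_mul_div, div_le_iff₀ (by positivity)]
    calc r * |‖y‖ - ‖x‖| * ‖y‖ ≤ ‖x‖ * ‖x - y‖ * ‖y‖ := by
          apply mul_le_mul_of_nonneg_right _ (norm_nonneg y)
          apply mul_le_mul hx _ (abs_nonneg _) (norm_nonneg x)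
          rw [abs_sub_comm]
          exact abs_norm_sub_norm_le x y
      _ = ‖x - y‖ * (‖x‖ * ‖y‖) := by ring
  calc ‖(r / ‖x‖) • (x - y) + ((r / ‖x‖) - (r / ‖y‖)) • y‖
      ≤ ‖(r / ‖x‖) • (x - y)‖ + ‖((r / ‖x‖) - (r / ‖y‖)) • y‖ := norm_add_le _ _
    _ ≤ ‖x - y‖ + ‖x - y‖ := add_le_add h1 h2
    _ = 2 * ‖x - y‖ := by ring

lemma SIB_comp_le_norm {ι : Type*} [Fintype ι] (w : EuclideanSpace ℝ ι) (i : ι) : |w i| ≤ ‖w‖ := by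
  rw [EuclideanSpace.norm_eq, ← Real.sqrt_sq (abs_nonneg (w i))]
  apply Real.sqrt_le_sqrt
  have := Finset.single_le_sum (f := fun j => ‖w j‖^2) (fun j _ => by positivity) (Finset.mem_univ i)
  simpa [sq_abs] using this

lemma SIB_cap_area_le (r s : ℝ) (hr : 0 < r) (hs : 0 ≤ s) (hsr : s ≤ r)
    (p : E3) (hp : ‖p‖ = r) :
    μH[2] {x : E3 | ‖x‖ = r ∧ ‖x - p‖ ≤ s} ≤ ENNReal.ofReal (256 * s ^ 2) := by
  have hp0 : p ≠ 0 := by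
    intro h; rw [h, norm_zero] at hp; exact hr.ne hp
  set F := (ℝ ∙ p)ᗮ with hFdef
  have hF : finrank ℝ F = 2 := by
    have h1 : finrank ℝ (ℝ ∙ p : Submodule ℝ E3) = 1 := finrank_span_singleton hp0
    have h2 := Submodule.finrank_add_finrank_orthogonal (K := (ℝ ∙ p : Submodule ℝ E3))
    rw [h1, finrank_euclideanSpace_fin] at h2
    rw [hFdef]
    omega
  set n := finrank ℝ F with hn
  set b := stdOrthonormalBasis ℝ F with hb
  set e : Fin n → E3 := fun i => (b i : E3) with he
  have he_norm : ∀ i, ‖e i‖ = 1 := fun i => by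
    exact b.orthonormal.1 i
  have he_inner : ∀ i, ⟪p, e i⟫ = 0 := fun i =>
    Submodule.mem_orthogonal_singleton_iff_inner_right.mp (b i).2
  set f : (Fin n → ℝ) → E3 := fun v => p + ∑ i, v i • e i with hf
  have hf_lip : LipschitzWith 2 f := by
    rw [lipschitzWith_iff_dist_le_mul]
    intro v w
    have hdiff : f v - f w = ∑ i, (v i - w i) • e i := by
      simp only [hf, add_sub_add_left_eq_sub, ← Finset.sum_sub_distrib, sub_smul]
    calc dist (f v) (f w) = ‖f v - f w‖ := dist_eq_norm _ _
      _ = ‖∑ i, (v i - w i) • e i‖ := by rw [hdiff]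
      _ ≤ ∑ i, ‖(v i - w i) • e i‖ := norm_sum_le _ _
      _ = ∑ i, |v i - w i| := by simp [norm_smul, he_norm]
      _ ≤ ∑ _i : Fin n, dist v w := Finset.sum_le_sum fun i _ => by
          simpa [Real.dist_eq] using dist_le_pi_dist v w i
      _ = n * dist v w := by simp [Finset.sum_const, nsmul_eq_mul]
      _ = 2 * dist v w := by
          have hn2 : (n : ℝ) = 2 := by exact_mod_cast hF
          rw [hn2]
  have hT : ∀ v : Fin n → ℝ, r ≤ ‖f v‖ := by
    intro v
    have hu : ⟪p, ∑ i, v i • e i⟫ = 0 := by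
      rw [inner_sum]
      simp only [real_inner_smul_right, he_inner, mul_zero, Finset.sum_const_zero]
    have hsq : ‖f v‖ ^ 2 = r ^ 2 + ‖∑ i, v i • e i‖ ^ 2 := by
      rw [hf]
      rw [norm_add_sq_real, hp, hu]; ring
    nlinarith [norm_nonneg (f v), norm_nonneg (∑ i, v i • e i), sq_nonneg (‖f v‖ - r)]
  set B := Metric.closedBall (0 : Fin n → ℝ) (2 * s) with hB
  -- the inclusion
  have hincl : {x : E3 | ‖x‖ = r ∧ ‖x - p‖ ≤ s} ⊆ (fun x : E3 => (r / ‖x‖) • x) '' (f '' B) := by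
    rintro x ⟨hxr, hxp⟩
    set t := ⟪x, p⟫ with htdef
    have ht : ‖x - p‖ ^ 2 = 2 * r ^ 2 - 2 * t := by
      rw [norm_sub_sq_real, hxr, hp]; ring
    have hle : ‖x - p‖ ^ 2 ≤ s ^ 2 := by nlinarith [norm_nonneg (x - p)]
    have ht2 : r ^ 2 / 2 ≤ t := by nlinarith
    have ht1 : t ≤ r ^ 2 := by nlinarith [sq_nonneg ‖x - p‖, norm_nonneg (x - p)]
    have ht0 : 0 < t := by nlinarith
    set lam := r ^ 2 / t with hlam
    set x' := lam • x with hx'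
    have hlam0 : 0 < lam := by positivity
    have hlamt : lam * t = r ^ 2 := by rw [hlam]; exact div_mul_cancel₀ _ ht0.ne'
    have hip : ⟪x', p⟫ = r ^ 2 := by
      rw [hx', real_inner_smul_left, ← htdef, hlamt]
    have hx'p : ⟪p, x' - p⟫ = 0 := by
      rw [inner_sub_right, real_inner_self_eq_norm_sq, hp, real_inner_comm, hip]
      ring
    have hmem : x' - p ∈ F := Submodule.mem_orthogonal_singleton_iff_inner_right.mpr hx'p
    have hnx' : ‖x'‖ = lam * r := by
      rw [hx', norm_smul, Real.norm_eq_abs, abs_of_pos hlam0, hxr]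
    have hx'sq : ‖x' - p‖ ^ 2 = lam ^ 2 * r ^ 2 - r ^ 2 := by
      rw [norm_sub_sq_real, hnx', hip, hp]; ring
    have hkey : (lam ^ 2 * r ^ 2 - r ^ 2) * t ^ 2 = r ^ 2 * ((r ^ 2 - t) * (r ^ 2 + t)) := by
      linear_combination r ^ 2 * (lam * t + r ^ 2) * hlamt
    have hbnd : ‖x' - p‖ ^ 2 ≤ 4 * s ^ 2 := by
      rw [hx'sq]
      have hlam1 : 1 ≤ lam := by rw [hlam, le_div_iff₀ ht0]; linarith
      have h5 : r ^ 2 - t ≤ s ^ 2 / 2 := by nlinarith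
      have h6 : (r ^ 2 - t) * (r ^ 2 + t) ≤ s ^ 2 / 2 * (2 * r ^ 2) := by nlinarith
      have hXt : (lam ^ 2 * r ^ 2 - r ^ 2) * t ^ 2 ≤ r ^ 2 * (s ^ 2 / 2 * (2 * r ^ 2)) := by
        rw [hkey]; nlinarith [sq_nonneg r]
      have hX0 : 0 ≤ lam ^ 2 * r ^ 2 - r ^ 2 := by nlinarith [hlam1, sq_nonneg r]
      have ht4 : r ^ 2 / 2 * (r ^ 2 / 2) ≤ t ^ 2 := by nlinarith
      nlinarith [hXt, mul_le_mul_of_nonneg_left ht4 hX0, pow_pos hr 2,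
        mul_pos (pow_pos hr 2) (pow_pos hr 2)]
    have hx'n : ‖x' - p‖ ≤ 2 * s := by nlinarith [norm_nonneg (x' - p)]
    set u : F := ⟨x' - p, hmem⟩ with hu
    set v : Fin n → ℝ := fun i => b.repr u i with hv
    have hfv : f v = x' := by
      have hrepr := b.sum_repr u
      have hcoe : ((∑ i, b.repr u i • b i : F) : E3) = ∑ i, b.repr u i • e i := by
        simp only [Submodule.coe_sum, Submodule.coe_smul, he]
      rw [hf]
      show p + ∑ i, b.repr u i • e i = x'
      rw [← hcoe, hrepr]
      show p + (x' - p) = x'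
      abel
    have hvball : v ∈ B := by
      rw [hB, mem_closedBall_zero_iff]
      refine (pi_norm_le_iff_of_nonneg (by positivity)).mpr fun i => ?_
      rw [Real.norm_eq_abs]
      calc |v i| ≤ ‖b.repr u‖ := SIB_comp_le_norm _ i
        _ = ‖u‖ := b.repr.norm_map u
        _ = ‖x' - p‖ := rfl
        _ ≤ 2 * s := hx'n
    refine ⟨x', ⟨v, hvball, hfv⟩, ?_⟩
    show (r / ‖x'‖) • x' = x
    rw [hnx', hx', smul_smul]
    have : r / (lam * r) * lam = 1 := by field_simp
    rw [this, one_smul]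
  -- measure estimates
  have hg_lip : LipschitzOnWith 2 (fun x : E3 => (r / ‖x‖) • x) (f '' B) :=
    (SIB_radial_lipschitzOn r hr).mono (by rintro _ ⟨v, _, rfl⟩; exact hT v)
  have h2 : μH[2] ((fun x : E3 => (r / ‖x‖) • x) '' (f '' B)) ≤ ((2:ℝ≥0) : ℝ≥0∞) ^ (2:ℝ) * μH[2] (f '' B) :=
    hg_lip.hausdorffMeasure_image_le (by norm_num)
  have h3 : μH[2] (f '' B) ≤ ((2:ℝ≥0) : ℝ≥0∞) ^ (2:ℝ) * μH[2] B :=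
    hf_lip.hausdorffMeasure_image_le (by norm_num) B
  have h4 : μH[(2:ℝ)] B = ENNReal.ofReal ((2 * (2 * s)) ^ 2) := by
    have hcard : ((Fintype.card (Fin n) : ℝ)) = (2 : ℝ) := by
      simp [← hn, hF]
    calc μH[(2:ℝ)] B = μH[(Fintype.card (Fin n) : ℝ)] B := by rw [hcard]
      _ = volume B := by rw [hausdorffMeasure_pi_real]
      _ = ENNReal.ofReal ((2 * (2 * s)) ^ Fintype.card (Fin n)) := by
          rw [hB, Real.volume_pi_closedBall _ (by positivity)]
      _ = ENNReal.ofReal ((2 * (2 * s)) ^ 2) := by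
          norm_num [← hn, hF]
  have hpow : ((2:ℝ≥0) : ℝ≥0∞) ^ (2:ℝ) = 4 := by
    rw [show ((2:ℝ≥0) : ℝ≥0∞) = (2:ℝ≥0∞) by norm_num,
      show (2:ℝ) = ((2:ℕ):ℝ) by norm_num, ENNReal.rpow_natCast]
    norm_num
  calc μH[2] {x : E3 | ‖x‖ = r ∧ ‖x - p‖ ≤ s}
      ≤ μH[2] ((fun x : E3 => (r / ‖x‖) • x) '' (f '' B)) := measure_mono hincl
    _ ≤ ((2:ℝ≥0) : ℝ≥0∞) ^ (2:ℝ) * μH[2] (f '' B) := h2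
    _ ≤ ((2:ℝ≥0) : ℝ≥0∞) ^ (2:ℝ) * (((2:ℝ≥0) : ℝ≥0∞) ^ (2:ℝ) * μH[2] B) := by
        exact mul_le_mul_right h3 _
    _ = 4 * (4 * ENNReal.ofReal ((2 * (2 * s)) ^ 2)) := by rw [hpow, h4]
    _ = ENNReal.ofReal (256 * s ^ 2) := by
        rw [show (4:ℝ≥0∞) = ENNReal.ofReal 4 by norm_num,
          ← ENNReal.ofReal_mul (by norm_num), ← ENNReal.ofReal_mul (by norm_num)]
        congr 1; ring

lemma SIB_sphere_area_le (r : ℝ) (hr : 0 < r) :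
    μH[2] {x : E3 | ‖x‖ = r} ≤ ENNReal.ofReal (1536 * r ^ 2) := by
  set P : Fin 3 × Bool → E3 := fun z =>
    (if z.2 then r else -r) • EuclideanSpace.single z.1 (1:ℝ) with hP
  have hPnorm : ∀ z, ‖P z‖ = r := by
    intro z
    rw [hP]
    simp only [norm_smul, EuclideanSpace.norm_single]
    rcases z.2 <;> simp [abs_of_pos hr, abs_of_neg (neg_neg_iff_pos.mpr hr)]
  have hcover : {x : E3 | ‖x‖ = r} ⊆
      ⋃ z : Fin 3 × Bool, {x : E3 | ‖x‖ = r ∧ ‖x - P z‖ ≤ r} := by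
    intro x hx
    simp only [mem_setOf_eq] at hx
    have hsum : ∑ i, x i ^ 2 = r ^ 2 := by
      have h1 : ‖x‖ ^ 2 = ∑ i, ‖x i‖ ^ 2 := by
        rw [EuclideanSpace.norm_eq, Real.sq_sqrt (by positivity)]
      rw [hx] at h1
      rw [h1]
      exact Finset.sum_congr rfl fun i _ => by rw [Real.norm_eq_abs, sq_abs]
    have hex : ∃ i, r ^ 2 / 3 ≤ x i ^ 2 := by
      by_contra hcon
      push_neg at hcon
      have : (∑ i, x i ^ 2) < ∑ _i : Fin 3, r ^ 2 / 3 :=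
        Finset.sum_lt_sum_of_nonempty (by simp) fun i _ => hcon i
      simp only [Finset.sum_const, Finset.card_univ, Fintype.card_fin, nsmul_eq_mul] at this
      rw [hsum] at this
      linarith
    obtain ⟨i, hi⟩ := hex
    have key : ∀ z : Fin 3 × Bool, ⟪x, P z⟫ = r * |x i| →
        x ∈ ⋃ z : Fin 3 × Bool, {x : E3 | ‖x‖ = r ∧ ‖x - P z‖ ≤ r} := by
      intro z hinner
      refine mem_iUnion.mpr ⟨z, mem_setOf_eq ▸ ⟨hx, ?_⟩⟩
      have habs : r ≤ 2 * |x i| := by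
        nlinarith [sq_abs (x i), abs_nonneg (x i)]
      have hn2 : ‖x - P z‖ ^ 2 ≤ r ^ 2 := by
        rw [norm_sub_sq_real, hx, hPnorm, hinner]
        nlinarith [abs_nonneg (x i)]
      nlinarith [norm_nonneg (x - P z)]
    by_cases h : 0 ≤ x i
    · refine key (i, true) ?_
      simp only [hP, real_inner_smul_right, EuclideanSpace.inner_single_right,
        RCLike.inner_apply, conj_trivial, if_pos rfl, abs_of_nonneg h, if_true]
      ring
    · refine key (i, false) ?_
      simp only [hP, real_inner_smul_right, EuclideanSpace.inner_single_right,
        RCLike.inner_apply, conj_trivial, Bool.false_eq_true, if_false,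
        abs_of_neg (lt_of_not_ge h)]
      ring
  calc μH[2] {x : E3 | ‖x‖ = r}
      ≤ μH[2] (⋃ z : Fin 3 × Bool, {x : E3 | ‖x‖ = r ∧ ‖x - P z‖ ≤ r}) := measure_mono hcover
    _ ≤ ∑' z : Fin 3 × Bool, μH[2] {x : E3 | ‖x‖ = r ∧ ‖x - P z‖ ≤ r} := measure_iUnion_le _
    _ ≤ ∑' _z : Fin 3 × Bool, ENNReal.ofReal (256 * r ^ 2) :=
        ENNReal.tsum_le_tsum fun z => SIB_cap_area_le r r hr hr.le le_rfl (P z) (hPnorm z)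
    _ = 6 * ENNReal.ofReal (256 * r ^ 2) := by
        rw [tsum_fintype]
        simp [Finset.sum_const, mul_comm]
    _ = ENNReal.ofReal (1536 * r ^ 2) := by
        rw [show (6:ℝ≥0∞) = ENNReal.ofReal 6 by norm_num, ← ENNReal.ofReal_mul (by norm_num)]
        congr 1; ring

lemma SIB_cap_area_le_all (r s : ℝ) (hr : 0 < r) (hs : 0 ≤ s)
    (p : E3) (hp : ‖p‖ = r) :
    μH[2] {x : E3 | ‖x‖ = r ∧ ‖x - p‖ ≤ s} ≤ ENNReal.ofReal (1536 * s ^ 2) := by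
  rcases le_or_gt s r with h | h
  · exact (SIB_cap_area_le r s hr hs h p hp).trans
      (ENNReal.ofReal_le_ofReal (by nlinarith))
  · refine (measure_mono (fun x hx => hx.1)).trans ?_
    exact (SIB_sphere_area_le r hr).trans (ENNReal.ofReal_le_ofReal (by nlinarith))

lemma SIB_sphere_ball_area_le (r t : ℝ) (hr : 0 < r) (ht : 0 ≤ t) (c : E3) :
    μH[2] {x : E3 | ‖x‖ = r ∧ ‖x - c‖ ≤ t} ≤ ENNReal.ofReal (6144 * t ^ 2) := by
  by_cases hne : ({x : E3 | ‖x‖ = r ∧ ‖x - c‖ ≤ t} : Set E3).Nonempty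
  · obtain ⟨x₀, hx₀r, hx₀c⟩ := hne
    have hsub : {x : E3 | ‖x‖ = r ∧ ‖x - c‖ ≤ t} ⊆ {x : E3 | ‖x‖ = r ∧ ‖x - x₀‖ ≤ 2 * t} := by
      rintro x ⟨hxr, hxc⟩
      refine ⟨hxr, ?_⟩
      calc ‖x - x₀‖ = ‖(x - c) - (x₀ - c)‖ := by abel_nf
        _ ≤ ‖x - c‖ + ‖x₀ - c‖ := norm_sub_le _ _
        _ ≤ 2 * t := by linarith
    refine (measure_mono hsub).trans ?_
    refine (SIB_cap_area_le_all r (2 * t) hr (by positivity) x₀ hx₀r).trans ?_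
    exact ENNReal.ofReal_le_ofReal (by nlinarith)
  · rw [not_nonempty_iff_eq_empty] at hne
    rw [hne]
    simp

lemma SIB_geom_identity (q : ℝ) (k : ℕ) :
    ((2:ℝ) ^ (k+1)) ^ (-(2 * q)) * (6144 * ((2:ℝ) ^ (k+2)) ^ 2)
      = (98304 * (2:ℝ) ^ (-(2 * q))) * (4 * (2:ℝ) ^ (-(2 * q))) ^ k := by
  induction k with
  | zero =>
    norm_num
    ring
  | succ j ih =>
    have e1 : ((2:ℝ) ^ (j+2)) = 2 * (2:ℝ) ^ (j+1) := by ring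
    have e2 : ((2:ℝ) ^ (j+3)) ^ 2 = 4 * ((2:ℝ) ^ (j+2)) ^ 2 := by ring
    have e3 : ((2:ℝ) * (2:ℝ) ^ (j+1)) ^ (-(2 * q))
        = (2:ℝ) ^ (-(2 * q)) * ((2:ℝ) ^ (j+1)) ^ (-(2 * q)) :=
      Real.mul_rpow (by norm_num) (by positivity)
    calc ((2:ℝ) ^ (j+1+1)) ^ (-(2 * q)) * (6144 * ((2:ℝ) ^ (j+1+2)) ^ 2)
        = ((2:ℝ) ^ (-(2 * q)) * ((2:ℝ) ^ (j+1)) ^ (-(2 * q)))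
            * (4 * (6144 * ((2:ℝ) ^ (j+2)) ^ 2)) := by
          rw [show (j+1+1) = j+2 from rfl, e1, e3, show (j+1+2) = j+3 from rfl, e2]
          ring
      _ = (4 * (2:ℝ) ^ (-(2 * q)))
            * (((2:ℝ) ^ (j+1)) ^ (-(2 * q)) * (6144 * ((2:ℝ) ^ (j+2)) ^ 2)) := by ring
      _ = (4 * (2:ℝ) ^ (-(2 * q)))
            * ((98304 * (2:ℝ) ^ (-(2 * q))) * (4 * (2:ℝ) ^ (-(2 * q))) ^ j) := by rw [ih]
      _ = (98304 * (2:ℝ) ^ (-(2 * q))) * (4 * (2:ℝ) ^ (-(2 * q))) ^ (j+1) := by ring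

set_option maxHeartbeats 1000000 in
/-- For every `q > 1` there is `C > 0` such that for every `r > 0`
and every `c ∈ ℝ³`, the surface integral of `‖x − c‖^{-2q}` over
`{‖x‖ = r, ‖x − c‖ ≥ 2}` is at most `C`. -/
theorem sphere_integral_inverse_power_uniform_bound (q : ℝ) (hq : 1 < q) :
    ∃ C > (0 : ℝ), ∀ r : ℝ, 0 < r → ∀ c : EuclideanSpace ℝ (Fin 3),
      ∫⁻ x in {x : EuclideanSpace ℝ (Fin 3) | ‖x‖ = r ∧ 2 ≤ ‖x - c‖},
          ENNReal.ofReal (‖x - c‖ ^ (-(2 * q))) ∂(μH[2])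
        ≤ ENNReal.ofReal C := by
  set w : ℝ := 4 * (2:ℝ) ^ (-(2 * q)) with hw
  set A : ℝ := 98304 * (2:ℝ) ^ (-(2 * q)) with hA
  have hrpow_pos : (0:ℝ) < (2:ℝ) ^ (-(2 * q)) := Real.rpow_pos_of_pos two_pos _
  have hw0 : 0 < w := by positivity
  have hw1 : w < 1 := by
    have h2 : (2:ℝ) ^ (-(2 * q)) < (2:ℝ) ^ (-(2:ℝ)) :=
      Real.rpow_lt_rpow_of_exponent_lt one_lt_two (by linarith)
    have h3 : (2:ℝ) ^ (-(2:ℝ)) = 1/4 := by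
      rw [Real.rpow_neg (by norm_num), show ((2:ℝ)) ^ (2:ℝ) = 4 by
        rw [show (2:ℝ) = ((2:ℕ):ℝ) by norm_num, Real.rpow_natCast]; norm_num]
      norm_num
    rw [h3] at h2
    rw [hw]; linarith
  have hA0 : 0 < A := by positivity
  refine ⟨A * (1 - w)⁻¹, mul_pos hA0 (inv_pos.mpr (by linarith)), ?_⟩
  intro r hr c
  set Bk : ℕ → Set E3 := fun k =>
    {x : E3 | ‖x‖ = r ∧ (2:ℝ) ^ (k+1) ≤ ‖x - c‖ ∧ ‖x - c‖ ≤ (2:ℝ) ^ (k+2)} with hBk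
  have hBkm : ∀ k, MeasurableSet (Bk k) := by
    intro k
    have : IsClosed (Bk k) := by
      rw [hBk]
      apply IsClosed.inter (isClosed_eq continuous_norm continuous_const)
      apply IsClosed.inter
      · exact isClosed_le continuous_const ((continuous_id.sub continuous_const).norm)
      · exact isClosed_le ((continuous_id.sub continuous_const).norm) continuous_const
    exact this.measurableSet
  have hcover : {x : E3 | ‖x‖ = r ∧ 2 ≤ ‖x - c‖} ⊆ ⋃ k, Bk k := by
    rintro x ⟨hxr, hxc⟩
    set d := ‖x - c‖ with hd
    have hP : ∃ m : ℕ, d < 2 ^ (m + 2) := by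
      obtain ⟨m, hm⟩ := pow_unbounded_of_one_lt d (one_lt_two (α := ℝ))
      exact ⟨m, hm.trans_le (by
        apply pow_le_pow_right₀ one_le_two
        omega)⟩
    classical
    set k := Nat.find hP with hk
    have hk2 : d ≤ 2 ^ (k + 2) := (Nat.find_spec hP).le
    have hk1 : (2:ℝ) ^ (k + 1) ≤ d := by
      rcases Nat.eq_zero_or_pos k with h0 | h0
      · rw [h0]; simpa using hxc
      · obtain ⟨j, hj⟩ := Nat.exists_eq_add_of_lt h0
        have hmin := Nat.find_min hP (m := j) (by omega)
        push_neg at hmin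
        have hke : k + 1 = j + 2 := by omega
        rw [hke]
        exact hmin
    exact mem_iUnion.mpr ⟨k, hxr, hk1, hk2⟩
  have hterm : ∀ k : ℕ,
      (∫⁻ x in Bk k, ENNReal.ofReal (‖x - c‖ ^ (-(2 * q))) ∂(μH[2]))
        ≤ ENNReal.ofReal (A * w ^ k) := by
    intro k
    have hpow_pos : (0:ℝ) < (2:ℝ) ^ (k+1) := by positivity
    have hbound : ∀ x ∈ Bk k,
        ENNReal.ofReal (‖x - c‖ ^ (-(2 * q)))
          ≤ ENNReal.ofReal (((2:ℝ) ^ (k+1)) ^ (-(2 * q))) := by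
      rintro x ⟨-, hx1, -⟩
      exact ENNReal.ofReal_le_ofReal
        (Real.rpow_le_rpow_of_nonpos hpow_pos hx1 (by linarith))
    calc (∫⁻ x in Bk k, ENNReal.ofReal (‖x - c‖ ^ (-(2 * q))) ∂(μH[2]))
        ≤ ∫⁻ _x in Bk k, ENNReal.ofReal (((2:ℝ) ^ (k+1)) ^ (-(2 * q))) ∂(μH[2]) :=
          setLIntegral_mono measurable_const hbound
      _ = ENNReal.ofReal (((2:ℝ) ^ (k+1)) ^ (-(2 * q))) * μH[2] (Bk k) :=
          setLIntegral_const _ _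
      _ ≤ ENNReal.ofReal (((2:ℝ) ^ (k+1)) ^ (-(2 * q)))
            * ENNReal.ofReal (6144 * ((2:ℝ) ^ (k+2)) ^ 2) := by
          apply mul_le_mul_right
          refine le_trans (measure_mono ?_) (SIB_sphere_ball_area_le r ((2:ℝ)^(k+2)) hr (by positivity) c)
          rintro x ⟨hxr, -, hx2⟩
          exact ⟨hxr, hx2⟩
      _ = ENNReal.ofReal (((2:ℝ) ^ (k+1)) ^ (-(2 * q)) * (6144 * ((2:ℝ) ^ (k+2)) ^ 2)) :=
          (ENNReal.ofReal_mul (by positivity)).symm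
      _ = ENNReal.ofReal (A * w ^ k) := by
          rw [hw, hA]
          congr 1
          exact SIB_geom_identity q k
  calc (∫⁻ x in {x : E3 | ‖x‖ = r ∧ 2 ≤ ‖x - c‖},
          ENNReal.ofReal (‖x - c‖ ^ (-(2 * q))) ∂(μH[2]))
      ≤ ∫⁻ x in ⋃ k, Bk k, ENNReal.ofReal (‖x - c‖ ^ (-(2 * q))) ∂(μH[2]) :=
        lintegral_mono_set hcover
    _ ≤ ∑' k, ∫⁻ x in Bk k, ENNReal.ofReal (‖x - c‖ ^ (-(2 * q))) ∂(μH[2]) :=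
        lintegral_iUnion_le _ _
    _ ≤ ∑' k, ENNReal.ofReal (A * w ^ k) := ENNReal.tsum_le_tsum hterm
    _ = ENNReal.ofReal (∑' k : ℕ, A * w ^ k) :=
        (ENNReal.ofReal_tsum_of_nonneg (fun k => by positivity)
          ((summable_geometric_of_lt_one hw0.le hw1).mul_left A)).symm
    _ = ENNReal.ofReal (A * (1 - w)⁻¹) := by
        rw [tsum_mul_left, tsum_geometric_of_lt_one hw0.le hw1]

end
end SIBhelpers
end

section
/- There exists a smooth, compactly supported map h : ℝ³ → (3×3 real matrices), not identically zero, such that for every x ∈ ℝ³: (i) h(x) is a symmetric matrix; (ii) h(x) is trace-free, i.e. Σ_{i=1}^{3} h_{ii}(x) = 0; (iii) h is divergence-free, i.e. Σ_{i=1}^{3} ∂_i h_{ij}(x) = 0 for each j = 1,2,3; and (iv) h is parity-symmetric, i.e. h(−x) = h(x). -/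
open scoped BigOperators

noncomputable section TTaux

private def fb : ContDiffBump (0:ℝ) := ⟨1, 2, one_pos, one_lt_two⟩

private def g (n : ℕ) : ℝ → ℝ := iteratedDeriv n fb

private lemma g_zero : g 0 = ⇑fb := iteratedDeriv_zero

private lemma g_succ (n : ℕ) : g (n+1) = deriv (g n) := iteratedDeriv_succ

private lemma g_smooth (n : ℕ) : ContDiff ℝ (⊤:ℕ∞) (g n) := by
  rw [g, iteratedDeriv_eq_iterate]
  exact fb.contDiff.iterate_deriv n

private lemma g_diff (n : ℕ) : Differentiable ℝ (g n) :=
  (g_smooth n).differentiable (by simp)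

private lemma g_hasDerivAt (n : ℕ) (t : ℝ) : HasDerivAt (g n) (g (n+1) t) t := by
  rw [g_succ]
  exact ((g_diff n) t).hasDerivAt

private lemma g_neg (n : ℕ) : ∀ t : ℝ, g n (-t) = (-1)^n * g n t := by
  induction n with
  | zero => intro t; simpa [g_zero] using fb.neg t
  | succ n ih =>
    intro t
    have h1 : (fun s : ℝ => g n (-s)) = fun s => (-1:ℝ)^n * g n s := funext ih
    have h2 : deriv (fun s : ℝ => g n (-s)) t = -deriv (g n) (-t) := deriv_comp_neg (g n) t
    have h3 : deriv (fun s : ℝ => (-1:ℝ)^n * g n s) t = (-1:ℝ)^n * deriv (g n) t :=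
      deriv_const_mul _ ((g_diff n) t)
    rw [h1, h3] at h2
    rw [g_succ]
    rw [← neg_eq_iff_eq_neg] at h2
    rw [← h2]; ring

private lemma g_tsupport (n : ℕ) : tsupport (g n) ⊆ Metric.closedBall (0:ℝ) 2 := by
  induction n with
  | zero => rw [g_zero, fb.tsupport_eq, show fb.rOut = 2 from rfl]
  | succ n ih =>
    refine subset_trans ?_ ih
    rw [g_succ]
    exact closure_minimal support_deriv_subset (isClosed_tsupport _)

private lemma g_vanish (n : ℕ) {t : ℝ} (ht : 2 < |t|) : g n t = 0 := by
  apply image_eq_zero_of_notMem_tsupport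
  intro hmem
  have := g_tsupport n hmem
  rw [Metric.mem_closedBall, Real.dist_eq, sub_zero] at this
  linarith

private lemma g4_zero : g 4 0 = 0 := by
  have hev : (⇑fb) =ᶠ[nhds (0:ℝ)] fun _ => 1 :=
    fb.eventuallyEq_one_of_mem_ball (Metric.mem_ball_self fb.rIn_pos)
  have h1 : g 4 0 = iteratedDeriv 4 (fun _ : ℝ => (1:ℝ)) 0 :=
    Filter.EventuallyEq.iteratedDeriv_eq 4 hev
  have h2 : iteratedDeriv 4 (fun _ : ℝ => (1:ℝ)) = fun _ => 0 := by
    ext t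
    simp [iteratedDeriv_succ', deriv_const']
  rw [h1, h2]

private lemma gfb_one : fb (0:ℝ) = 1 :=
  fb.one_of_mem_closedBall (by
    have h1 : fb.rIn = 1 := rfl
    rw [h1]
    exact Metric.mem_closedBall_self zero_le_one)

private lemma g_descent (n : ℕ) (h : ∀ t, g (n+1) t = 0) : ∀ t, g n t = 0 := by
  intro t
  have hc : g n t = g n 3 := by
    apply is_const_of_deriv_eq_zero (g_diff n)
    intro s
    rw [g_succ] at h
    exact h s
  rw [hc]
  exact g_vanish n (by norm_num)

private lemma g4_exists : ∃ p, g 4 p ≠ 0 := by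
  by_contra hcon
  push_neg at hcon
  have h0 := g_descent 0 (g_descent 1 (g_descent 2 (g_descent 3 hcon)))
  have hz := h0 0
  rw [g_zero, gfb_one] at hz
  exact one_ne_zero hz

private abbrev E3 := EuclideanSpace ℝ (Fin 3)

private def T (a b c : ℕ) : E3 → ℝ := fun x => g a (x 0) * (g b (x 1) * g c (x 2))

private lemma T_contDiff (a b c : ℕ) : ContDiff ℝ (⊤:ℕ∞) (T a b c) := by
  have c0 : ContDiff ℝ (⊤:ℕ∞) fun x : E3 => g a (x 0) :=
    (g_smooth a).comp (EuclideanSpace.proj (0:Fin 3) : E3 →L[ℝ] ℝ).contDiff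
  have c1 : ContDiff ℝ (⊤:ℕ∞) fun x : E3 => g b (x 1) :=
    (g_smooth b).comp (EuclideanSpace.proj (1:Fin 3) : E3 →L[ℝ] ℝ).contDiff
  have c2 : ContDiff ℝ (⊤:ℕ∞) fun x : E3 => g c (x 2) :=
    (g_smooth c).comp (EuclideanSpace.proj (2:Fin 3) : E3 →L[ℝ] ℝ).contDiff
  exact c0.mul (c1.mul c2)

private lemma proj_hasFDerivAt (a : ℕ) (i : Fin 3) (x : E3) :
    HasFDerivAt (fun y : E3 => g a (y i))
      ((g (a+1) (x i)) • (EuclideanSpace.proj i : E3 →L[ℝ] ℝ)) x := by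
  have h := (g_hasDerivAt a (x i)).hasFDerivAt.comp x
    (EuclideanSpace.proj (i:Fin 3) : E3 →L[ℝ] ℝ).hasFDerivAt
  refine h.congr_fderiv ?_
  ext y
  simp [mul_comm]

private lemma T_hasFDerivAt (a b c : ℕ) (x : E3) :
    HasFDerivAt (T a b c)
      ((g (a+1) (x 0) * (g b (x 1) * g c (x 2))) • (EuclideanSpace.proj (0:Fin 3) : E3 →L[ℝ] ℝ)
       + (g a (x 0) * (g (b+1) (x 1) * g c (x 2))) • (EuclideanSpace.proj (1:Fin 3) : E3 →L[ℝ] ℝ)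
       + (g a (x 0) * (g b (x 1) * g (c+1) (x 2))) • (EuclideanSpace.proj (2:Fin 3) : E3 →L[ℝ] ℝ)) x := by
  have h := (proj_hasFDerivAt a 0 x).mul ((proj_hasFDerivAt b 1 x).mul (proj_hasFDerivAt c 2 x))
  refine h.congr_fderiv ?_
  ext y
  simp [ContinuousLinearMap.add_apply, ContinuousLinearMap.smul_apply, smul_eq_mul]
  ring

private lemma T_fderiv (a b c : ℕ) (x : E3) (k : Fin 3) :
    fderiv ℝ (T a b c) x (EuclideanSpace.single k 1) =
      (if (0:Fin 3) = k then g (a+1) (x 0) * (g b (x 1) * g c (x 2)) else 0)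
      + (if (1:Fin 3) = k then g a (x 0) * (g (b+1) (x 1) * g c (x 2)) else 0)
      + (if (2:Fin 3) = k then g a (x 0) * (g b (x 1) * g (c+1) (x 2)) else 0) := by
  rw [(T_hasFDerivAt a b c x).fderiv]
  simp only [ContinuousLinearMap.add_apply, ContinuousLinearMap.smul_apply,
    PiLp.proj_apply, EuclideanSpace.single_apply, smul_eq_mul]
  fin_cases k <;> norm_num

private def hh : E3 → Fin 3 → Fin 3 → ℝ := fun x =>
  ![![T 0 4 0 x - T 0 0 4 x, -T 1 3 0 x - T 1 1 2 x, T 1 2 1 x + T 1 0 3 x],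
    ![-T 1 3 0 x - T 1 1 2 x, T 2 2 0 x + T 2 0 2 x - T 0 2 2 x + T 0 0 4 x, T 0 3 1 x - T 0 1 3 x],
    ![T 1 2 1 x + T 1 0 3 x, T 0 3 1 x - T 0 1 3 x, -T 0 4 0 x + T 0 2 2 x - T 2 2 0 x - T 2 0 2 x]]

private lemma T_neg (a b c : ℕ) (x : E3) : T a b c (-x) = (-1:ℝ)^(a+b+c) * T a b c x := by
  have h0 : (-x) 0 = -(x 0) := rfl
  have h1 : (-x) 1 = -(x 1) := rfl
  have h2 : (-x) 2 = -(x 2) := rfl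
  simp only [T, h0, h1, h2, g_neg, pow_add]
  ring

private lemma T_vanish {x : E3} (hx : ¬(|x 0| ≤ 2 ∧ |x 1| ≤ 2 ∧ |x 2| ≤ 2))
    (a b c : ℕ) : T a b c x = 0 := by
  by_cases h0 : |x 0| ≤ 2
  · by_cases h1 : |x 1| ≤ 2
    · have h2 : 2 < |x 2| := by
        by_contra h2
        exact hx ⟨h0, h1, not_lt.mp h2⟩
      simp [T, g_vanish c h2]
    · simp [T, g_vanish b (not_le.mp h1)]
  · simp [T, g_vanish a (not_le.mp h0)]

end TTaux

/-- There exists a smooth, compactly supported, not identically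
zero map `h : ℝ³ → (3×3 real matrices)` (entries `h x i j`) which is pointwise
symmetric, trace-free, divergence-free, and parity-symmetric: a smooth compactly
supported TT symmetric 2-tensor on Euclidean ℝ³. -/
theorem exists_TT_tensor :
    ∃ h : EuclideanSpace ℝ (Fin 3) → (Fin 3 → Fin 3 → ℝ),
      ContDiff ℝ (⊤ : ℕ∞) h ∧
      HasCompactSupport h ∧
      h ≠ 0 ∧
      ∀ x : EuclideanSpace ℝ (Fin 3),
        (∀ i j : Fin 3, h x i j = h x j i) ∧
        (∑ i : Fin 3, h x i i = 0) ∧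
        (∀ j : Fin 3,
          ∑ i : Fin 3,
            fderiv ℝ (fun y => h y i j) x (EuclideanSpace.single i 1) = 0) ∧
        h (-x) = h x := by
  refine ⟨hh, ?_, ?_, ?_, ?_⟩
  · -- smoothness
    refine contDiff_pi.mpr fun i => contDiff_pi.mpr fun j => ?_
    fin_cases i <;> fin_cases j
    · exact (T_contDiff 0 4 0).sub (T_contDiff 0 0 4)
    · exact ((T_contDiff 1 3 0).neg).sub (T_contDiff 1 1 2)
    · exact (T_contDiff 1 2 1).add (T_contDiff 1 0 3)
    · exact ((T_contDiff 1 3 0).neg).sub (T_contDiff 1 1 2)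
    · exact (((T_contDiff 2 2 0).add (T_contDiff 2 0 2)).sub (T_contDiff 0 2 2)).add
        (T_contDiff 0 0 4)
    · exact (T_contDiff 0 3 1).sub (T_contDiff 0 1 3)
    · exact (T_contDiff 1 2 1).add (T_contDiff 1 0 3)
    · exact (T_contDiff 0 3 1).sub (T_contDiff 0 1 3)
    · exact (((T_contDiff 0 4 0).neg.add (T_contDiff 0 2 2)).sub (T_contDiff 2 2 0)).sub
        (T_contDiff 2 0 2)
  · -- compact support
    have hvan : ∀ x : E3, ¬(|x 0| ≤ 2 ∧ |x 1| ≤ 2 ∧ |x 2| ≤ 2) → hh x = 0 := by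
      intro x hx
      have hz : ∀ i j, hh x i j = 0 := by
        intro i j
        fin_cases i <;> fin_cases j <;> simp [hh, T_vanish hx, Matrix.vecHead, Matrix.vecTail]
      funext i j
      exact hz i j
    have hSclosed : IsClosed {x : E3 | |x 0| ≤ 2 ∧ |x 1| ≤ 2 ∧ |x 2| ≤ 2} := by
      have c0 : Continuous fun x : E3 => |x 0| :=
        continuous_abs.comp (EuclideanSpace.proj (0 : Fin 3)).continuous
      have c1 : Continuous fun x : E3 => |x 1| :=
        continuous_abs.comp (EuclideanSpace.proj (1 : Fin 3)).continuous
      have c2 : Continuous fun x : E3 => |x 2| :=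
        continuous_abs.comp (EuclideanSpace.proj (2 : Fin 3)).continuous
      exact ((isClosed_le c0 continuous_const).inter
        ((isClosed_le c1 continuous_const).inter (isClosed_le c2 continuous_const)))
    have hSbdd : Bornology.IsBounded {x : E3 | |x 0| ≤ 2 ∧ |x 1| ≤ 2 ∧ |x 2| ≤ 2} := by
      refine isBounded_iff_forall_norm_le.2 ⟨4, fun x hx => ?_⟩
      obtain ⟨h0, h1, h2⟩ := hx
      have hn : ‖x‖ = Real.sqrt (∑ i : Fin 3, ‖x i‖ ^ 2) := EuclideanSpace.norm_eq x
      rw [hn, Fin.sum_univ_three]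
      have hsum : ‖x 0‖ ^ 2 + ‖x 1‖ ^ 2 + ‖x 2‖ ^ 2 ≤ 16 := by
        simp only [Real.norm_eq_abs]
        nlinarith [abs_nonneg (x 0), abs_nonneg (x 1), abs_nonneg (x 2)]
      calc Real.sqrt (‖x 0‖ ^ 2 + ‖x 1‖ ^ 2 + ‖x 2‖ ^ 2) ≤ Real.sqrt 16 :=
            Real.sqrt_le_sqrt hsum
        _ = 4 := by
            rw [show (16:ℝ) = 4 ^ 2 by norm_num, Real.sqrt_sq (by norm_num : (0:ℝ) ≤ 4)]
    have hScompact := Metric.isCompact_of_isClosed_isBounded hSclosed hSbdd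
    refine IsCompact.of_isClosed_subset hScompact (isClosed_tsupport hh)
      (closure_minimal ?_ hSclosed)
    intro x hx
    by_contra hmem
    exact hx (hvan x hmem)
  · -- not identically zero
    obtain ⟨p, hp⟩ := g4_exists
    intro h0
    apply hp
    have e : hh (EuclideanSpace.single 1 p) 0 0 = g 4 p := by
      show T 0 4 0 (EuclideanSpace.single 1 p) - T 0 0 4 (EuclideanSpace.single 1 p) = g 4 p
      simp [T, EuclideanSpace.single_apply, g_zero, gfb_one, g4_zero]
    rw [← e, h0]
    rfl
  · intro x
    refine ⟨?_, ?_, ?_, ?_⟩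
    · intro i j
      fin_cases i <;> fin_cases j <;> rfl
    · rw [Fin.sum_univ_three]
      show (T 0 4 0 x - T 0 0 4 x) + (T 2 2 0 x + T 2 0 2 x - T 0 2 2 x + T 0 0 4 x)
        + (-T 0 4 0 x + T 0 2 2 x - T 2 2 0 x - T 2 0 2 x) = 0
      ring
    · intro j
      rw [Fin.sum_univ_three]
      fin_cases j
      · show fderiv ℝ (fun y => T 0 4 0 y - T 0 0 4 y) x (EuclideanSpace.single 0 1)
          + fderiv ℝ (fun y => -T 1 3 0 y - T 1 1 2 y) x (EuclideanSpace.single 1 1)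
          + fderiv ℝ (fun y => T 1 2 1 y + T 1 0 3 y) x (EuclideanSpace.single 2 1) = 0
        rw [((T_hasFDerivAt 0 4 0 x).fun_sub (T_hasFDerivAt 0 0 4 x)).fderiv,
          (((T_hasFDerivAt 1 3 0 x).fun_neg).fun_sub (T_hasFDerivAt 1 1 2 x)).fderiv,
          ((T_hasFDerivAt 1 2 1 x).fun_add (T_hasFDerivAt 1 0 3 x)).fderiv]
        simp [EuclideanSpace.single_apply]
        ring
      · show fderiv ℝ (fun y => -T 1 3 0 y - T 1 1 2 y) x (EuclideanSpace.single 0 1)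
          + fderiv ℝ (fun y => T 2 2 0 y + T 2 0 2 y - T 0 2 2 y + T 0 0 4 y) x
              (EuclideanSpace.single 1 1)
          + fderiv ℝ (fun y => T 0 3 1 y - T 0 1 3 y) x (EuclideanSpace.single 2 1) = 0
        rw [(((T_hasFDerivAt 1 3 0 x).fun_neg).fun_sub (T_hasFDerivAt 1 1 2 x)).fderiv,
          ((((T_hasFDerivAt 2 2 0 x).fun_add (T_hasFDerivAt 2 0 2 x)).fun_sub
            (T_hasFDerivAt 0 2 2 x)).fun_add (T_hasFDerivAt 0 0 4 x)).fderiv,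
          ((T_hasFDerivAt 0 3 1 x).fun_sub (T_hasFDerivAt 0 1 3 x)).fderiv]
        simp [EuclideanSpace.single_apply]
        ring
      · show fderiv ℝ (fun y => T 1 2 1 y + T 1 0 3 y) x (EuclideanSpace.single 0 1)
          + fderiv ℝ (fun y => T 0 3 1 y - T 0 1 3 y) x (EuclideanSpace.single 1 1)
          + fderiv ℝ (fun y => -T 0 4 0 y + T 0 2 2 y - T 2 2 0 y - T 2 0 2 y) x
              (EuclideanSpace.single 2 1) = 0
        rw [((T_hasFDerivAt 1 2 1 x).fun_add (T_hasFDerivAt 1 0 3 x)).fderiv,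
          ((T_hasFDerivAt 0 3 1 x).fun_sub (T_hasFDerivAt 0 1 3 x)).fderiv,
          ((((T_hasFDerivAt 0 4 0 x).fun_neg.fun_add (T_hasFDerivAt 0 2 2 x)).fun_sub
            (T_hasFDerivAt 2 2 0 x)).fun_sub (T_hasFDerivAt 2 0 2 x)).fderiv]
        simp [EuclideanSpace.single_apply]
        ring
    · funext i j
      fin_cases i <;> fin_cases j <;>
        · show _ = _
          norm_num [hh, T_neg]
end
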